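/- Let M be a smooth (C^∞), finite-dimensional, connected, Hausdorff, second-countable manifold without boundary. Then there exists a countable family 𝒞 of smooth (C^∞) compactly supported functions f : M → ℝ such that for every x ∈ M the set of differentials {d_x f : f ∈ 𝒞} is dense in the cotangent space T_x^*M (the dual of the tangent space T_xM, with its canonical finite-dimensional topology). In particular, for every x ∈ M and every linear subspace D ⊆ T_xM, the restrictions {d_x f|_D : f ∈ 𝒞} are dense in the dual space D^*. -/

import Mathlib

open scoped Manifold
open Set Function

/-- Lemma 4.11: on a smooth finite-dimensional manifold there is a
countable family `𝒞` of compactly supported smooth functions whose differentials at each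
point `x` are dense in the cotangent space; in particular their restrictions to any
subspace `D` of the tangent space are dense in `D*`. -/
theorem stmt_11 (m : ℕ) (M : Type*) [TopologicalSpace M] [T2Space M]
    [SecondCountableTopology M] [ConnectedSpace M]
    [ChartedSpace (EuclideanSpace ℝ (Fin m)) M] [IsManifold (𝓡 m) (⊤ : ℕ∞) M] :
    ∃ C : Set (M → ℝ), C.Countable ∧
      (∀ f ∈ C, ContMDiff (𝓡 m) 𝓘(ℝ, ℝ) (⊤ : ℕ∞) f ∧ HasCompactSupport f) ∧
      (∀ x : M,
        Dense {L : TangentSpace (𝓡 m) x →L[ℝ] ℝ |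
          ∃ f ∈ C, mfderiv (𝓡 m) 𝓘(ℝ, ℝ) f x = L}) ∧
      (∀ (x : M) (D : Submodule ℝ (TangentSpace (𝓡 m) x)),
        Dense {ℓ : D →L[ℝ] ℝ |
          ∃ f ∈ C, (mfderiv (𝓡 m) 𝓘(ℝ, ℝ) f x).comp D.subtypeL = ℓ}) := by
  set E := EuclideanSpace ℝ (Fin m)
  haveI : LocallyCompactSpace M := ChartedSpace.locallyCompactSpace E M
  haveI : SigmaCompactSpace M := inferInstance
  obtain ⟨ι, fb, -⟩ := SmoothBumpCovering.exists_isSubordinate (𝓡 m) (M := M)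
    (U := fun _ => univ) isClosed_univ (fun x _ => Filter.univ_mem)
  have hιc : (univ : Set ι).Countable :=
    fb.locallyFinite.countable_univ fun i => (fb i).nonempty_support
  obtain ⟨Q, hQc, hQd⟩ := TopologicalSpace.exists_countable_dense (E →L[ℝ] ℝ)
  set F : ι × (E →L[ℝ] ℝ) → (M → ℝ) :=
    fun p => fun z => fb p.1 z • p.2 (extChartAt (𝓡 m) (fb.c p.1) z) with hF
  have key : ∀ x : M,
      Dense {L : TangentSpace (𝓡 m) x →L[ℝ] ℝ |
        ∃ f ∈ (F '' (univ ×ˢ Q)), mfderiv (𝓡 m) 𝓘(ℝ, ℝ) f x = L} := by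
    intro x
    set i := fb.ind x (mem_univ x) with hi
    set c := fb.c i with hc
    have hx : x ∈ (chartAt E c).source := fb.mem_chartAt_ind_source x (mem_univ x)
    have hx' : x ∈ (extChartAt (𝓡 m) c).source := fb.mem_extChartAt_ind_source x (mem_univ x)
    set D := mfderiv (𝓡 m) 𝓘(ℝ, E) (extChartAt (𝓡 m) c) x with hD
    have hDd : HasMFDerivAt (𝓡 m) 𝓘(ℝ, E) (extChartAt (𝓡 m) c) x D :=
      (mdifferentiableAt_extChartAt hx).hasMFDerivAt
    set D' := mfderivWithin 𝓘(ℝ, E) (𝓡 m) (extChartAt (𝓡 m) c).symm (Set.range (𝓡 m))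
      (extChartAt (𝓡 m) c x) with hD'
    have h1 : D'.comp D = ContinuousLinearMap.id ℝ _ :=
      mfderivWithin_extChartAt_symm_comp_mfderiv_extChartAt' hx'
    have hmf : ∀ ℓ : E →L[ℝ] ℝ,
        mfderiv (𝓡 m) 𝓘(ℝ, ℝ) (F (i, ℓ)) x = ℓ.comp D := by
      intro ℓ
      have hev : F (i, ℓ) =ᶠ[nhds x] fun z => ℓ (extChartAt (𝓡 m) c z) := by
        filter_upwards [fb.eventuallyEq_one x (mem_univ x)] with z hz
        rw [← hi] at hz
        simp only [hF, hz, ← hc, Pi.one_apply, one_smul]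
      rw [hev.mfderiv_eq]
      exact (ℓ.hasMFDerivAt.comp x hDd).mfderiv
    have hsurj : Function.Surjective (fun ℓ : E →L[ℝ] ℝ => ℓ.comp D) := by
      intro L
      refine ⟨L.comp D', ?_⟩
      show (L.comp D').comp D = L
      exact ContinuousLinearMap.ext fun v => congrArg L (ContinuousLinearMap.ext_iff.mp h1 v)
    have hcont : Continuous (fun ℓ : E →L[ℝ] ℝ => ℓ.comp D) :=
      (ContinuousLinearMap.precomp ℝ D).continuous
    have hdense : Dense ((fun ℓ : E →L[ℝ] ℝ => ℓ.comp D) '' Q) :=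
      hsurj.denseRange.dense_image hcont hQd
    refine hdense.mono ?_
    rintro L ⟨ℓ, hℓ, rfl⟩
    exact ⟨F (i, ℓ), ⟨(i, ℓ), ⟨mem_univ _, hℓ⟩, rfl⟩, hmf ℓ⟩
  refine ⟨F '' (univ ×ˢ Q), (hιc.prod hQc).image F, ?_, ?_, ?_⟩
  · rintro f ⟨⟨i, ℓ⟩, ⟨-, hℓ⟩, rfl⟩
    constructor
    · exact (fb i).contMDiff_smul
        (ℓ.contMDiff.comp_contMDiffOn (contMDiffOn_extChartAt))
    · exact ((fb i).hasCompactSupport).smul_right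
  · exact key
  · -- density of restricted differentials
    intro x D0
    haveI : T2Space (TangentSpace (𝓡 m) x) := inferInstanceAs (T2Space E)
    haveI : FiniteDimensional ℝ (TangentSpace (𝓡 m) x) :=
      inferInstanceAs (FiniteDimensional ℝ E)
    haveI : ContinuousSMul ℝ (TangentSpace (𝓡 m) x) :=
      inferInstanceAs (ContinuousSMul ℝ E)
    have hsurj : Function.Surjective
        (fun L : TangentSpace (𝓡 m) x →L[ℝ] ℝ => L.comp D0.subtypeL) := by
      intro ℓ
      obtain ⟨g, hg⟩ := LinearMap.exists_extend (ℓ : D0 →ₗ[ℝ] ℝ)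
      refine ⟨LinearMap.toContinuousLinearMap g, ?_⟩
      ext v
      have := LinearMap.congr_fun hg v
      simpa using this
    have hcont : Continuous
        (fun L : TangentSpace (𝓡 m) x →L[ℝ] ℝ => L.comp D0.subtypeL) :=
      (ContinuousLinearMap.precomp ℝ D0.subtypeL).continuous
    have hdense : Dense ((fun L : TangentSpace (𝓡 m) x →L[ℝ] ℝ => L.comp D0.subtypeL) ''
        {L | ∃ f ∈ (F '' (univ ×ˢ Q)), mfderiv (𝓡 m) 𝓘(ℝ, ℝ) f x = L}) :=
      hsurj.denseRange.dense_image hcont (key x)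
    refine hdense.mono ?_
    rintro ℓ ⟨L, ⟨f, hf, rfl⟩, rfl⟩
    exact ⟨f, hf, rfl⟩
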